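/- Let u = (u₁, u₂) : [0,∞) → ℝ² be continuous with u(0) = 0, with each uⱼ of locally bounded variation, and suppose the signed measures satisfy (u₁ + u₂) du₂ ≤ 0 and (u₁ - u₂) du₁ ≤ 0 (as Lebesgue–Stieltjes measures). Then u ≡ 0. -/

import Mathlib

open Set MeasureTheory

lemma key_measure_le (μ ν : Measure ℝ) [IsLocallyFiniteMeasure μ] [IsLocallyFiniteMeasure ν]
    (v : ℝ → ℝ) (hv : Continuous v) (a b : ℝ) (hab : a ≤ b)
    (hpos : ∀ t ∈ Icc a b, 0 < v t)
    (h : ∀ B : Set ℝ, MeasurableSet B → B ⊆ Ioc a b →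
      (∫ t in B, v t ∂μ) ≤ ∫ t in B, v t ∂ν) :
    μ (Ioc a b) ≤ ν (Ioc a b) := by
  set g : ℝ → ENNReal := fun t => ENNReal.ofReal (v t) with hg
  have hmeasg : Measurable g := hv.measurable.ennreal_ofReal
  obtain ⟨x0, hx0mem, hx0⟩ := isCompact_Icc.exists_isMaxOn ⟨a, left_mem_Icc.2 hab⟩ hv.continuousOn
  -- finiteness of lintegrals
  have hbound : ∀ (κ : Measure ℝ), κ (Icc a b) ≠ ⊤ → ∀ S : Set ℝ, S ⊆ Ioc a b →
      (∫⁻ t in S, g t ∂κ) ≠ ⊤ := by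
    intro κ hκ S hS
    have h1 : (∫⁻ t in S, g t ∂κ) ≤ ∫⁻ t in Icc a b, g t ∂κ :=
      lintegral_mono' (Measure.restrict_mono (hS.trans Ioc_subset_Icc_self) le_rfl) le_rfl
    have h2 : (∫⁻ t in Icc a b, g t ∂κ) ≤ ∫⁻ _ in Icc a b, ENNReal.ofReal (v x0) ∂κ :=
      setLIntegral_mono measurable_const (fun x hx => ENNReal.ofReal_le_ofReal (hx0 hx))
    rw [setLIntegral_const] at h2
    exact ((h1.trans h2).trans_lt (ENNReal.mul_lt_top ENNReal.ofReal_lt_top hκ.lt_top)).ne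
  have hμfin : μ (Icc a b) ≠ ⊤ := isCompact_Icc.measure_lt_top.ne
  have hνfin : ν (Icc a b) ≠ ⊤ := isCompact_Icc.measure_lt_top.ne
  -- lintegral version of the hypothesis
  have hlint : ∀ S : Set ℝ, MeasurableSet S → S ⊆ Ioc a b →
      (∫⁻ t in S, g t ∂μ) ≤ ∫⁻ t in S, g t ∂ν := by
    intro S hSm hSsub
    have h1 := h S hSm hSsub
    have hnn : ∀ (κ : Measure ℝ), 0 ≤ᵐ[κ.restrict S] v := fun κ =>
      (ae_restrict_iff' hSm).2 (Filter.Eventually.of_forall fun t ht =>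
        (hpos t (Ioc_subset_Icc_self (hSsub ht))).le)
    rw [integral_eq_lintegral_of_nonneg_ae (hnn μ) hv.aestronglyMeasurable,
      integral_eq_lintegral_of_nonneg_ae (hnn ν) hv.aestronglyMeasurable] at h1
    exact (ENNReal.toReal_le_toReal (hbound μ hμfin S hSsub) (hbound ν hνfin S hSsub)).1 h1
  set α : Measure ℝ := (μ.restrict (Ioc a b)).withDensity g with hα
  set β : Measure ℝ := (ν.restrict (Ioc a b)).withDensity g with hβ
  have hαβ : α ≤ β := by
    rw [Measure.le_iff]
    intro s hs
    rw [hα, hβ, withDensity_apply _ hs, withDensity_apply _ hs,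
      Measure.restrict_restrict hs, Measure.restrict_restrict hs]
    exact hlint _ (hs.inter measurableSet_Ioc) inter_subset_right
  have hone : ∀ t ∈ Ioc a b, (g t)⁻¹ * g t = 1 := by
    intro t ht
    have hvt := hpos t (Ioc_subset_Icc_self ht)
    rw [ENNReal.inv_mul_cancel (ENNReal.ofReal_pos.2 hvt).ne' ENNReal.ofReal_ne_top]
  have hrepr : ∀ (κ : Measure ℝ),
      κ (Ioc a b) = ∫⁻ t, (g t)⁻¹ ∂((κ.restrict (Ioc a b)).withDensity g) := by
    intro κ
    rw [lintegral_withDensity_eq_lintegral_mul _ hmeasg (g := fun t => (g t)⁻¹) hmeasg.inv]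
    have : (∫⁻ t, (g * fun t => (g t)⁻¹) t ∂(κ.restrict (Ioc a b)))
        = ∫⁻ t in Ioc a b, 1 ∂κ := by
      apply setLIntegral_congr_fun measurableSet_Ioc
      refine fun t ht => ?_
      simp only [Pi.mul_apply]
      rw [mul_comm]
      exact hone t ht
    rw [this, setLIntegral_one]
  rw [hrepr μ, hrepr ν]
  exact lintegral_mono' hαβ le_rfl

lemma stieltjes_step (p q : StieltjesFunction ℝ)
    (v : ℝ → ℝ) (hv : Continuous v) (a b : ℝ) (hab : a ≤ b)
    (hpos : ∀ t ∈ Icc a b, 0 < v t)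
    (h : ∀ B : Set ℝ, MeasurableSet B → B ⊆ Ioc a b →
      (∫ t in B, v t ∂p.measure) ≤ ∫ t in B, v t ∂q.measure) :
    p b - q b ≤ p a - q a := by
  have hkey : p.measure (Ioc a b) ≤ q.measure (Ioc a b) :=
    key_measure_le p.measure q.measure v hv a b hab hpos h
  rw [p.measure_Ioc, q.measure_Ioc] at hkey
  have hq : q a ≤ q b := q.mono hab
  have := (ENNReal.ofReal_le_ofReal_iff (by linarith)).1 hkey
  linarith

lemma first_touch_step (p q : StieltjesFunction ℝ)
    (v : ℝ → ℝ) (hv : Continuous v) (t0 : ℝ) (ht0 : 0 < t0) (hvpos : 0 < v t0)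
    (h : ∀ B : Set ℝ, MeasurableSet B → B ⊆ Ici 0 →
      (∫ t in B, v t ∂p.measure) ≤ ∫ t in B, v t ∂q.measure) :
    ∃ a, 0 ≤ a ∧ a < t0 ∧ p t0 - q t0 ≤ p a - q a := by
  obtain ⟨l, r, hlr, hsub⟩ := mem_nhds_iff_exists_Ioo_subset.1
    ((isOpen_lt continuous_const hv).mem_nhds (show (0:ℝ) < v t0 from hvpos))
  obtain ⟨hl, hr⟩ := hlr
  set a : ℝ := max ((l + t0)/2) (t0/2) with ha
  have ha0 : 0 ≤ a := le_trans (by linarith) (le_max_right _ _)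
  have halt : a < t0 := by
    apply max_lt <;> linarith
  have hicc : Icc a t0 ⊆ Ioo l r := by
    intro x hx
    obtain ⟨hx1, hx2⟩ := hx
    constructor
    · have : (l + t0)/2 ≤ a := le_max_left _ _
      linarith
    · linarith
  refine ⟨a, ha0, halt, ?_⟩
  apply stieltjes_step p q v hv a t0 halt.le
  · exact fun t ht => hsub (hicc ht)
  · intro B hB hBsub
    exact h B hB (fun x hx => le_trans ha0 (hBsub hx).1.le)

theorem critical_measure_inequalities_imply_zero
    (u : ℝ → Fin 2 → ℝ) (m mbar : Fin 2 → StieltjesFunction ℝ)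
    (hmc : ∀ j, Continuous (m j)) (hmbarc : ∀ j, Continuous (mbar j))
    (hdecomp : ∀ t, ∀ j, u t j = m j t - mbar j t)
    (hu0 : u 0 = 0)
    (h2 : ∀ B : Set ℝ, MeasurableSet B → B ⊆ Set.Ici 0 →
      (∫ t in B, (u t 0 + u t 1) ∂(m 1).measure)
        ≤ ∫ t in B, (u t 0 + u t 1) ∂(mbar 1).measure)
    (h1 : ∀ B : Set ℝ, MeasurableSet B → B ⊆ Set.Ici 0 →
      (∫ t in B, (u t 0 - u t 1) ∂(m 0).measure)
        ≤ ∫ t in B, (u t 0 - u t 1) ∂(mbar 0).measure) :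
    ∀ t ∈ Set.Ici (0:ℝ), u t = 0 := by
  intro T hT
  by_contra hne
  have hcu : ∀ j, Continuous fun t => u t j := by
    intro j
    have : (fun t => u t j) = fun t => m j t - mbar j t := funext fun t => hdecomp t j
    rw [this]
    exact (hmc j).sub (hmbarc j)
  set Mf : ℝ → ℝ := fun t => max |u t 0| |u t 1| with hMf
  have hMc : Continuous Mf := ((hcu 0).abs).max ((hcu 1).abs)
  have hM0 : Mf 0 = 0 := by simp [hMf, hu0]
  set lam : ℝ := Mf T with hlamdef
  have hlam : 0 < lam := by
    obtain ⟨j, hj⟩ := Function.ne_iff.1 hne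
    have hj' : u T j ≠ 0 := by simpa using hj
    have habs : 0 < |u T j| := abs_pos.2 hj'
    rw [hlamdef, hMf]
    fin_cases j
    · exact lt_of_lt_of_le habs (le_max_left _ _)
    · exact lt_of_lt_of_le habs (le_max_right _ _)
  set S : Set ℝ := Icc 0 T ∩ Mf ⁻¹' (Ici lam) with hSdef
  have hSne : S.Nonempty := ⟨T, ⟨hT, le_rfl⟩, mem_preimage.2 (mem_Ici.2 le_rfl)⟩
  have hScl : IsClosed S := isClosed_Icc.inter (isClosed_Ici.preimage hMc)
  have hbdd : BddBelow S := ⟨0, fun s hs => hs.1.1⟩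
  set t0 : ℝ := sInf S with ht0def
  have ht0S : t0 ∈ S := hScl.csInf_mem hSne hbdd
  have ht0Icc : t0 ∈ Icc 0 T := ht0S.1
  have hlow : ∀ s, 0 ≤ s → s < t0 → Mf s < lam := by
    intro s hs0 hst
    by_contra hc
    push_neg at hc
    have hsS : s ∈ S := ⟨⟨hs0, hst.le.trans ht0Icc.2⟩, hc⟩
    exact absurd (csInf_le hbdd hsS) (not_le.2 hst)
  have ht0pos : 0 < t0 := by
    rcases ht0Icc.1.lt_or_eq with h | h
    · exact h
    · exfalso
      have : lam ≤ Mf t0 := ht0S.2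
      rw [← h, hM0] at this
      linarith
  have hMt0 : Mf t0 = lam := by
    refine le_antisymm ?_ ht0S.2
    by_contra hc
    push_neg at hc
    obtain ⟨s, hsmem, hsval⟩ := intermediate_value_Icc ht0Icc.1 hMc.continuousOn
      (show lam ∈ Icc (Mf 0) (Mf t0) from by rw [hM0]; exact ⟨hlam.le, hc.le⟩)
    have hsS : s ∈ S := ⟨⟨hsmem.1, hsmem.2.trans ht0Icc.2⟩, hsval.ge⟩
    have h1' := csInf_le hbdd hsS
    have hst0 : s = t0 := le_antisymm hsmem.2 h1'
    rw [hst0] at hsval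
    linarith
  have hb0 : |u t0 0| ≤ lam := le_trans (le_max_left _ _) hMt0.le
  have hb1 : |u t0 1| ≤ lam := le_trans (le_max_right _ _) hMt0.le
  -- the four contradiction steps
  have K1 : u t0 1 = lam → 0 < u t0 0 + u t0 1 → False := by
    intro hy hv
    obtain ⟨a, ha0, hat, hle⟩ := first_touch_step (m 1) (mbar 1)
      (fun s => u s 0 + u s 1) ((hcu 0).add (hcu 1)) t0 ht0pos hv h2
    have hMa := hlow a ha0 hat
    have habs : |u a 1| ≤ Mf a := le_max_right _ _
    have := le_abs_self (u a 1)
    have e1 := hdecomp t0 1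
    have e2 := hdecomp a 1
    linarith
  have K2 : u t0 1 = -lam → u t0 0 + u t0 1 < 0 → False := by
    intro hy hv
    obtain ⟨a, ha0, hat, hle⟩ := first_touch_step (mbar 1) (m 1)
      (fun s => -(u s 0 + u s 1)) ((hcu 0).add (hcu 1)).neg t0 ht0pos (by show 0 < -(u t0 0 + u t0 1); linarith)
      (by
        intro B hB hBs
        have := h2 B hB hBs
        rw [integral_neg, integral_neg]
        linarith)
    have hMa := hlow a ha0 hat
    have habs : |u a 1| ≤ Mf a := le_max_right _ _
    have := neg_abs_le (u a 1)
    have e1 := hdecomp t0 1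
    have e2 := hdecomp a 1
    linarith
  have K3 : u t0 0 = lam → 0 < u t0 0 - u t0 1 → False := by
    intro hy hv
    obtain ⟨a, ha0, hat, hle⟩ := first_touch_step (m 0) (mbar 0)
      (fun s => u s 0 - u s 1) ((hcu 0).sub (hcu 1)) t0 ht0pos hv h1
    have hMa := hlow a ha0 hat
    have habs : |u a 0| ≤ Mf a := le_max_left _ _
    have := le_abs_self (u a 0)
    have e1 := hdecomp t0 0
    have e2 := hdecomp a 0
    linarith
  have K4 : u t0 0 = -lam → u t0 0 - u t0 1 < 0 → False := by
    intro hy hv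
    obtain ⟨a, ha0, hat, hle⟩ := first_touch_step (mbar 0) (m 0)
      (fun s => -(u s 0 - u s 1)) ((hcu 0).sub (hcu 1)).neg t0 ht0pos (by show 0 < -(u t0 0 - u t0 1); linarith)
      (by
        intro B hB hBs
        have := h1 B hB hBs
        rw [integral_neg, integral_neg]
        linarith)
    have hMa := hlow a ha0 hat
    have habs : |u a 0| ≤ Mf a := le_max_left _ _
    have := neg_abs_le (u a 0)
    have e1 := hdecomp t0 0
    have e2 := hdecomp a 0
    linarith
  -- case analysis
  have hcases : |u t0 0| = lam ∨ |u t0 1| = lam := by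
    rcases max_choice |u t0 0| |u t0 1| with h | h
    · left; rw [← hMt0, hMf]; exact h.symm
    · right; rw [← hMt0, hMf]; exact h.symm
  have hnb0 : -lam ≤ u t0 0 := by have := neg_abs_le (u t0 0); linarith
  have hnb1 : -lam ≤ u t0 1 := by have := neg_abs_le (u t0 1); linarith
  have hub0 : u t0 0 ≤ lam := le_trans (le_abs_self _) hb0
  have hub1 : u t0 1 ≤ lam := le_trans (le_abs_self _) hb1
  rcases hcases with hx | hy
  · rcases (abs_eq hlam.le).1 hx with hx1 | hx2
    · rcases hub1.lt_or_eq with hy1 | hy1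
      · exact K3 hx1 (by linarith)
      · exact K1 hy1 (by linarith)
    · rcases hnb1.eq_or_lt with hy1 | hy1
      · exact K2 hy1.symm (by linarith)
      · exact K4 hx2 (by linarith)
  · rcases (abs_eq hlam.le).1 hy with hy1 | hy1
    · rcases hnb0.eq_or_lt with hx1 | hx1
      · exact K4 hx1.symm (by linarith)
      · exact K1 hy1 (by linarith)
    · rcases hub0.lt_or_eq with hx1 | hx1
      · exact K2 hy1 (by linarith)
      · exact K3 hx1 (by linarith)
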